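/- Let G be a locally compact second countable group acting continuously on a locally compact second countable space X, let μ be a finitely supported probability measure on G, and let ν be an ergodic μ-stationary probability measure on X. If ν assigns full measure to a countable subset of X, then ν is supported on a finite set and gives equal mass to all elements of that set. -/

import Mathlib

open MeasureTheory

variable {G X : Type*}

/-- `ν` is `μ`-stationary: `μ * ν = ν`. -/
def IsStationaryMeasure [Group G] [MulAction G X] [MeasurableSpace G] [MeasurableSpace X]
    (μ : Measure G) (ν : Measure X) : Prop :=
  Measure.map (fun q : G × X => q.1 • q.2) (μ.prod ν) = ν

/-- `ν` is an ergodic `μ`-stationary probability measure (extreme point of the convex set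
of stationary probability measures). -/
def IsErgodicStationaryMeasure [Group G] [MulAction G X] [MeasurableSpace G]
    [MeasurableSpace X] (μ : Measure G) (ν : Measure X) : Prop :=
  IsStationaryMeasure μ ν ∧
    ∀ ν₁ ν₂ : Measure X, IsProbabilityMeasure ν₁ → IsProbabilityMeasure ν₂ →
      IsStationaryMeasure μ ν₁ → IsStationaryMeasure μ ν₂ →
      ∀ t : ENNReal, 0 < t → t < 1 → ν = t • ν₁ + (1 - t) • ν₂ → ν₁ = ν ∧ ν₂ = ν


set_option linter.unusedSectionVars false

section Aux

variable [Group G] [TopologicalSpace G] [IsTopologicalGroup G]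
    [SecondCountableTopology G] [MeasurableSpace G] [BorelSpace G]
    [TopologicalSpace X] [T2Space X] [SecondCountableTopology X]
    [MeasurableSpace X] [BorelSpace X]
    [MulAction G X] [ContinuousSMul G X]

lemma smul_measurable' : Measurable (fun q : G × X => q.1 • q.2) :=
  continuous_smul.measurable

lemma map_prod_apply (μ : Measure G) (ρ : Measure X) [SFinite ρ] {A : Set X}
    (hA : MeasurableSet A) :
    Measure.map (fun q : G × X => q.1 • q.2) (μ.prod ρ) A
      = ∫⁻ g, ρ ((g • ·) ⁻¹' A) ∂μ := by
  rw [Measure.map_apply smul_measurable' hA, Measure.prod_apply (smul_measurable' hA)]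
  rfl

lemma slice_measurable (ρ : Measure X) [SFinite ρ] {A : Set X} (hA : MeasurableSet A) :
    Measurable (fun g : G => ρ ((g • ·) ⁻¹' A)) := by
  exact measurable_measure_prodMk_left (ν := ρ)
    (s := (fun q : G × X => q.1 • q.2) ⁻¹' A) (smul_measurable' hA)

lemma stat_smul_restrict (μ : Measure G) [IsProbabilityMeasure μ] (ν : Measure X)
    [IsFiniteMeasure ν] (hstat : IsStationaryMeasure μ ν)
    {E : Set X} (hE : MeasurableSet E)
    (hinv : ∀ᵐ g ∂μ, (g • ·) ⁻¹' E = E) (c : ENNReal) :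
    IsStationaryMeasure μ (c • ν.restrict E) := by
  unfold IsStationaryMeasure
  ext A hA
  rw [map_prod_apply _ _ hA]
  have hpre : ∀ g : G, MeasurableSet ((g • ·) ⁻¹' A : Set X) := fun g =>
    (continuous_const_smul g).measurable hA
  calc ∫⁻ g, (c • ν.restrict E) ((g • ·) ⁻¹' A) ∂μ
      = ∫⁻ g, c * ν ((g • ·) ⁻¹' (A ∩ E)) ∂μ := by
        refine lintegral_congr_ae ?_
        filter_upwards [hinv] with g hg
        rw [Measure.smul_apply, smul_eq_mul, Measure.restrict_apply (hpre g)]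
        conv_rhs => rw [Set.preimage_inter, hg]
    _ = c * ∫⁻ g, ν ((g • ·) ⁻¹' (A ∩ E)) ∂μ :=
        lintegral_const_mul c (slice_measurable ν (hA.inter hE))
    _ = c * ν (A ∩ E) := by rw [← map_prod_apply μ ν (hA.inter hE), hstat]
    _ = (c • ν.restrict E) A := by
        rw [Measure.smul_apply, smul_eq_mul, Measure.restrict_apply hA]

end Aux


/-- An ergodic `μ`-stationary probability measure giving full measure to a
countable set is supported on a finite set and gives equal mass `1/|S|` to each of its
elements. -/
theorem ergodic_stationary_countable_support_finite
    [Group G] [TopologicalSpace G] [IsTopologicalGroup G] [LocallyCompactSpace G]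
    [SecondCountableTopology G] [MeasurableSpace G] [BorelSpace G]
    [TopologicalSpace X] [T2Space X] [LocallyCompactSpace X] [SecondCountableTopology X]
    [MeasurableSpace X] [BorelSpace X]
    [MulAction G X] [ContinuousSMul G X]
    (μ : Measure G) [IsProbabilityMeasure μ]
    (hfin : ∃ s : Finset G, μ (↑s : Set G)ᶜ = 0)
    (ν : Measure X) [IsProbabilityMeasure ν]
    (herg : IsErgodicStationaryMeasure μ ν)
    (hcount : ∃ C : Set X, C.Countable ∧ ν C = 1) :
    ∃ S : Finset X, S.Nonempty ∧ ν (↑S : Set X) = 1 ∧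
      ∀ x ∈ S, ν {x} = ((S.card : ENNReal))⁻¹ := by
  obtain ⟨C, hCc, hC1⟩ := hcount
  have hstat := herg.1
  have key : ∀ {A : Set X}, MeasurableSet A → ∫⁻ g, ν ((g • ·) ⁻¹' A) ∂μ = ν A := by
    intro A hA
    rw [← map_prod_apply μ ν hA, hstat]
  have hpos : ∃ x, 0 < ν ({x} : Set X) := by
    by_contra h
    push_neg at h
    have h0 : ν C = 0 := by
      have h1 : ν (⋃ x ∈ C, ({x} : Set X)) = 0 :=
        (measure_biUnion_null_iff hCc).2 fun x _ => le_antisymm (h x) zero_le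
      simpa using h1
    rw [h0] at hC1
    exact one_ne_zero hC1.symm
  obtain ⟨x₁, hx₁⟩ := hpos
  set m := ⨆ x : X, ν {x} with hm_def
  have hm_pos : 0 < m := lt_of_lt_of_le hx₁ (le_iSup (fun x : X => ν {x}) x₁)
  have hm_le : m ≤ 1 := iSup_le fun x => prob_le_one
  have hm_ne_top : m ≠ ⊤ := (lt_of_le_of_lt hm_le ENNReal.one_lt_top).ne
  have hhalf : m / 2 < m := ENNReal.half_lt_self hm_pos.ne' hm_ne_top
  set D := {x : X | m / 2 < ν {x}} with hD_def
  have hD_fin : D.Finite := by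
    by_contra h
    have hinf : D.Infinite := h
    set e := Set.Infinite.natEmbedding D hinf with he
    have hdisj : Pairwise (Function.onFun Disjoint fun n : ℕ => ({(e n : X)} : Set X)) := by
      intro i j hij
      refine Set.disjoint_singleton.2 fun hEq => hij (e.injective (Subtype.ext hEq))
    have hsum := measure_iUnion (μ := ν) hdisj fun n => measurableSet_singleton ((e n : X))
    have hge : (⊤ : ENNReal) ≤ ν (⋃ n, ({(e n : X)} : Set X)) := by
      rw [hsum]
      have h2 : (⊤ : ENNReal) = ∑' _ : ℕ, m / 2 :=
        (ENNReal.tsum_const_eq_top_of_ne_zero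
          (by simpa using (ENNReal.half_pos hm_pos.ne').ne')).symm
      rw [h2]
      exact ENNReal.tsum_le_tsum fun n => le_of_lt (e n).2
    have hle := le_trans hge (prob_le_one (μ := ν) (s := ⋃ n, ({(e n : X)} : Set X)))
    simp at hle
  have hD_ne : D.Nonempty := by
    obtain ⟨x, hx⟩ := lt_iSup_iff.mp hhalf
    exact ⟨x, hx⟩
  obtain ⟨x₀, hx₀D, hx₀max⟩ :=
    hD_fin.toFinset.exists_max_image (fun x => ν {x}) (by simpa using hD_ne)
  have hx₀m : ν {x₀} = m := by
    refine le_antisymm (le_iSup (fun x : X => ν {x}) x₀) (iSup_le fun x => ?_)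
    by_cases hx : x ∈ D
    · exact hx₀max x (hD_fin.mem_toFinset.2 hx)
    · have h1 : ν {x} ≤ m / 2 := le_of_not_gt hx
      have h2 : m / 2 ≤ ν {x₀} := le_of_lt (hD_fin.mem_toFinset.1 hx₀D)
      exact h1.trans h2
  set S := {x : X | ν {x} = m} with hS_def
  have hS_sub : S ⊆ D := by
    intro x hx
    have hx' : ν {x} = m := hx
    show m / 2 < ν {x}
    rw [hx']; exact hhalf
  have hS_fin : S.Finite := hD_fin.subset hS_sub
  have hS_meas : MeasurableSet S := hS_fin.measurableSet
  have hx₀S : x₀ ∈ S := hx₀m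
  have hpre_singleton : ∀ (g : G) (x : X), ((g • ·) ⁻¹' {x} : Set X) = {g⁻¹ • x} := by
    intro g x
    ext y
    simp only [Set.mem_preimage, Set.mem_singleton_iff]
    exact smul_eq_iff_eq_inv_smul g
  have hinv_pt : ∀ x ∈ S, ∀ᵐ g ∂μ, g⁻¹ • x ∈ S := by
    intro x hx
    have hxm : ν {x} = m := hx
    have h1 : ∫⁻ g, ν ((g • ·) ⁻¹' ({x} : Set X)) ∂μ = m := by
      rw [key (measurableSet_singleton x), hxm]
    have hf_meas : Measurable fun g : G => ν ((g • ·) ⁻¹' ({x} : Set X)) :=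
      slice_measurable ν (measurableSet_singleton x)
    have hf_le : ∀ g : G, ν ((g • ·) ⁻¹' ({x} : Set X)) ≤ m := by
      intro g
      rw [hpre_singleton]
      exact le_iSup (fun x : X => ν {x}) _
    have hzero : ∫⁻ g, (m - ν ((g • ·) ⁻¹' ({x} : Set X))) ∂μ = 0 := by
      rw [lintegral_sub hf_meas (by rw [h1]; exact hm_ne_top) (ae_of_all _ hf_le),
        lintegral_const, measure_univ, mul_one, h1, tsub_self]
    have hae := (lintegral_eq_zero_iff (measurable_const.sub hf_meas)).1 hzero
    filter_upwards [hae] with g hg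
    have hge : m ≤ ν ((g • ·) ⁻¹' ({x} : Set X)) := tsub_eq_zero_iff_le.1 hg
    have heq : ν ((g • ·) ⁻¹' ({x} : Set X)) = m := le_antisymm (hf_le g) hge
    rw [hpre_singleton] at heq
    exact heq
  have hinv_ae : ∀ᵐ g ∂μ, ((g • ·) ⁻¹' S : Set X) = S := by
    have hall := (ae_ball_iff hS_fin.countable).2 hinv_pt
    filter_upwards [hall] with g hg
    have hmt : Set.MapsTo (fun y : X => g⁻¹ • y) S S := fun y hy => hg y hy
    have hinj : Set.InjOn (fun y : X => g⁻¹ • y) S := (MulAction.injective g⁻¹).injOn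
    have hbij := (hS_fin.injOn_iff_bijOn_of_mapsTo hmt).1 hinj
    have himg : (fun y : X => g⁻¹ • y) '' S = S := hbij.image_eq
    ext y
    simp only [Set.mem_preimage]
    constructor
    · intro hy
      have h2 : g⁻¹ • g • y ∈ S := hg _ hy
      simpa using h2
    · intro hy
      rw [← himg] at hy
      obtain ⟨z, hz, hzy⟩ := hy
      have h3 : g • y = z := by rw [← hzy]; simp
      rw [h3]; exact hz
  have ht_pos : 0 < ν S :=
    lt_of_lt_of_le (hx₀m ▸ hm_pos) (measure_mono (Set.singleton_subset_iff.2 hx₀S))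
  have ht_le : ν S ≤ 1 := prob_le_one
  have ht_ne_top : ν S ≠ ⊤ := (lt_of_le_of_lt ht_le ENNReal.one_lt_top).ne
  have hSone : ν S = 1 := by
    rcases eq_or_lt_of_le ht_le with h | hlt
    · exact h
    exfalso
    have hSc_meas := hS_meas.compl
    have hc_eq : ν Sᶜ = 1 - ν S := prob_compl_eq_one_sub hS_meas
    have hSc_pos : 0 < ν Sᶜ := by rw [hc_eq]; exact tsub_pos_of_lt hlt
    have hSc_ne_top : ν Sᶜ ≠ ⊤ := (lt_of_le_of_lt prob_le_one ENNReal.one_lt_top).ne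
    set ν₁ := (ν S)⁻¹ • ν.restrict S with hν₁
    set ν₂ := (ν Sᶜ)⁻¹ • ν.restrict Sᶜ with hν₂
    have hp₁ : IsProbabilityMeasure ν₁ := ⟨by
      rw [hν₁, Measure.smul_apply, smul_eq_mul, Measure.restrict_apply_univ]
      exact ENNReal.inv_mul_cancel ht_pos.ne' ht_ne_top⟩
    have hp₂ : IsProbabilityMeasure ν₂ := ⟨by
      rw [hν₂, Measure.smul_apply, smul_eq_mul, Measure.restrict_apply_univ]
      exact ENNReal.inv_mul_cancel hSc_pos.ne' hSc_ne_top⟩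
    have hst₁ : IsStationaryMeasure μ ν₁ :=
      stat_smul_restrict μ ν hstat hS_meas hinv_ae _
    have hinv_ae_c : ∀ᵐ g ∂μ, ((g • ·) ⁻¹' Sᶜ : Set X) = Sᶜ := by
      filter_upwards [hinv_ae] with g hg
      rw [Set.preimage_compl, hg]
    have hst₂ : IsStationaryMeasure μ ν₂ :=
      stat_smul_restrict μ ν hstat hSc_meas hinv_ae_c _
    have hdec : ν = ν S • ν₁ + (1 - ν S) • ν₂ := by
      ext A hA
      simp only [hν₁, hν₂, Measure.coe_add, Pi.add_apply, Measure.smul_apply, smul_eq_mul,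
        Measure.restrict_apply hA]
      rw [← hc_eq, ← mul_assoc, ← mul_assoc,
        ENNReal.mul_inv_cancel ht_pos.ne' ht_ne_top,
        ENNReal.mul_inv_cancel hSc_pos.ne' hSc_ne_top, one_mul, one_mul,
        ← Set.diff_eq, measure_inter_add_diff A hS_meas]
    obtain ⟨h1, -⟩ := herg.2 ν₁ ν₂ hp₁ hp₂ hst₁ hst₂ (ν S) ht_pos hlt hdec
    have h2 : ν₁ S = ν S := by rw [h1]
    rw [hν₁, Measure.smul_apply, smul_eq_mul, Measure.restrict_apply hS_meas,
      Set.inter_self, ENNReal.inv_mul_cancel ht_pos.ne' ht_ne_top] at h2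
    exact hlt.ne' h2
  refine ⟨hS_fin.toFinset, ⟨x₀, hS_fin.mem_toFinset.2 hx₀S⟩, ?_, ?_⟩
  · rw [hS_fin.coe_toFinset]; exact hSone
  · intro x hxF
    have hx : ν {x} = m := hS_fin.mem_toFinset.1 hxF
    have hcard : (hS_fin.toFinset.card : ENNReal) * m = 1 := by
      have hU : (↑hS_fin.toFinset : Set X) = ⋃ y ∈ hS_fin.toFinset, ({y} : Set X) := by
        simp
      have hd : (↑hS_fin.toFinset : Set X).PairwiseDisjoint (fun y : X => ({y} : Set X)) :=
        fun a _ b _ hab => Set.disjoint_singleton.2 hab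
      have hBU := measure_biUnion_finset (μ := ν) hd fun y _ => measurableSet_singleton y
      rw [← hU, hS_fin.coe_toFinset, hSone] at hBU
      have hsum : ∑ y ∈ hS_fin.toFinset, ν {y} = (hS_fin.toFinset.card : ENNReal) * m := by
        rw [Finset.sum_congr rfl fun y hy => (hS_fin.mem_toFinset.1 hy : ν {y} = m),
          Finset.sum_const, nsmul_eq_mul]
      rw [hsum] at hBU
      exact hBU.symm
    have hcard0 : (hS_fin.toFinset.card : ENNReal) ≠ 0 := by
      simp only [ne_eq, Nat.cast_eq_zero]
      exact Finset.card_ne_zero_of_mem (hS_fin.mem_toFinset.2 hx₀S)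
    have hcardtop : (hS_fin.toFinset.card : ENNReal) ≠ ⊤ := ENNReal.natCast_ne_top _
    rw [hx, ← one_mul m, ← ENNReal.inv_mul_cancel hcard0 hcardtop, mul_assoc, hcard, mul_one]
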